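/- For every natural number n, the ∞pede strategy profiles p_n and π_n in which both agents always take are subgame perfect equilibria: SPE(p_n) ∧ SPE(π_n). -/

import Mathlib

noncomputable section

/-- The two agents. -/
inductive Ag : Type
  | A
  | B
deriving DecidableEq

/-- The set of choices `{1, 2}`. -/
inductive Choice : Type
  | one
  | two
deriving DecidableEq

/-- The polynomial functor whose final coalgebra is the set of finite or
infinite strategy profiles: a node is either an ending position carrying a
utility assignment (no children) or an internal position carrying an agent
and a choice (two children, indexed by `Bool`). -/
def SPF (Agent : Type) : PFunctor.{0} :=
  ⟨(Agent → ℝ) ⊕ (Agent × Choice), fun x => Sum.rec (fun _ => Empty) (fun _ => Bool) x⟩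

/-- Finite or infinite strategy profiles, as the M-type (final coalgebra). -/
def StratProf (Agent : Type) : Type :=
  (SPF Agent).M

/-- The ending position `⟨u⟩`. -/
def leafP {Agent : Type} (u : Agent → ℝ) : StratProf Agent :=
  PFunctor.M.mk ⟨Sum.inl u, fun e => Empty.elim e⟩

/-- The strategy profile `⟨a, c, s₁, s₂⟩`. -/
def nodeP {Agent : Type} (a : Agent) (c : Choice) (s₁ s₂ : StratProf Agent) :
    StratProf Agent :=
  PFunctor.M.mk ⟨Sum.inr (a, c), fun b => bif b then s₂ else s₁⟩

/-- The child selected by choice `c`. -/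
def cchild {Agent : Type} (c : Choice) (s₁ s₂ : StratProf Agent) : StratProf Agent :=
  match c with
  | .one => s₁
  | .two => s₂

/-- `conv s`: following the choices of `s` reaches an ending position after
finitely many steps (inductive definition). -/
inductive Conv {Agent : Type} : StratProf Agent → Prop
  | leaf (u : Agent → ℝ) : Conv (leafP u)
  | node1 (a : Agent) (s₁ s₂ : StratProf Agent) :
      Conv s₁ → Conv (nodeP a Choice.one s₁ s₂)
  | node2 (a : Agent) (s₁ s₂ : StratProf Agent) :
      Conv s₂ → Conv (nodeP a Choice.two s₁ s₂)

/-- The graph of the (partial) utility assignment `ŝ`: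
`UtilR s u` holds iff following the choices of `s` reaches the ending
position `⟨u⟩`. -/
inductive UtilR {Agent : Type} : StratProf Agent → (Agent → ℝ) → Prop
  | leaf (u : Agent → ℝ) : UtilR (leafP u) u
  | node1 (a : Agent) (s₁ s₂ : StratProf Agent) (u : Agent → ℝ) :
      UtilR s₁ u → UtilR (nodeP a Choice.one s₁ s₂) u
  | node2 (a : Agent) (s₁ s₂ : StratProf Agent) (u : Agent → ℝ) :
      UtilR s₂ u → UtilR (nodeP a Choice.two s₁ s₂) u

open Classical in
/-- The utility assignment `ŝ` (an arbitrary default on non-convergent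
profiles). -/
def util {Agent : Type} (s : StratProf Agent) : Agent → ℝ :=
  if h : ∃ u, UtilR s u then h.choose else fun _ => 0

/-- `□P`, the coinductive `always` modality: `P` holds at every position of
the strategy profile (greatest fixed point). -/
def Always {Agent : Type} (P : StratProf Agent → Prop) (s : StratProf Agent) : Prop :=
  ∃ R : StratProf Agent → Prop, R s ∧ ∀ t, R t →
    P t ∧ ∀ a c s₁ s₂, t = nodeP a c s₁ s₂ → R s₁ ∧ R s₂

/-- `PE s`: `s` is always-convergent and the choice at the root of `s` is at
least as good, for the agent who owns the root, as the other choice. -/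
def PE {Agent : Type} (s : StratProf Agent) : Prop :=
  Always Conv s ∧
    (∀ a s₁ s₂, s = nodeP a Choice.one s₁ s₂ → util s₁ a ≥ util s₂ a) ∧
    (∀ a s₁ s₂, s = nodeP a Choice.two s₁ s₂ → util s₂ a ≥ util s₁ a)

/-- Subgame perfect equilibrium: `□PE`. -/
def SPE {Agent : Type} : StratProf Agent → Prop :=
  Always PE

/-- `s =_g s'`: the two strategy profiles have the same underlying game
(coinductive definition). -/
def SameGame {Agent : Type} (s s' : StratProf Agent) : Prop :=
  ∃ R : StratProf Agent → StratProf Agent → Prop, R s s' ∧ ∀ t t', R t t' →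
    (∃ u, t = leafP u ∧ t' = leafP u) ∨
    (∃ a c c' s₁ s₂ s₁' s₂',
      t = nodeP a c s₁ s₂ ∧ t' = nodeP a c' s₁' s₂' ∧ R s₁ s₁' ∧ R s₂ s₂')

/-- `Rat_∞`: rationality for finite or infinite strategy profiles
(coinductive definition). -/
def RatInf {Agent : Type} (s : StratProf Agent) : Prop :=
  ∃ R : StratProf Agent → Prop, R s ∧ ∀ t, R t →
    (∃ u, t = leafP u) ∨
    (∃ a c s₁ s₂ s₁' s₂', t = nodeP a c s₁ s₂ ∧
      SameGame (nodeP a c s₁' s₂') (nodeP a c s₁ s₂) ∧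
      SPE (nodeP a c s₁' s₂') ∧ R (cchild c s₁ s₂))

/-- `diverg`: following the choices never reaches an ending position
(coinductive definition). -/
def Diverg {Agent : Type} (s : StratProf Agent) : Prop :=
  ∃ R : StratProf Agent → Prop, R s ∧ ∀ t, R t →
    ∃ a c s₁ s₂, t = nodeP a c s₁ s₂ ∧ R (cchild c s₁ s₂)

/-- Utilities of the leaf reached when Alice takes at her `n`-th position of
the ∞pede: `A ↦ 2^(2n+2)`, `B ↦ 2^(2n)`. -/
def uAp (n : ℕ) : Ag → ℝ := fun x =>
  match x with
  | Ag.A => (2 : ℝ) ^ (2 * n + 2)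
  | Ag.B => (2 : ℝ) ^ (2 * n)

/-- Utilities of the leaf reached when Bob takes at his `n`-th position of
the ∞pede: `A ↦ 2^(2n+1)`, `B ↦ 2^(2n+3)`. -/
def uBp (n : ℕ) : Ag → ℝ := fun x =>
  match x with
  | Ag.A => (2 : ℝ) ^ (2 * n + 1)
  | Ag.B => (2 : ℝ) ^ (2 * n + 3)

/-- States for the mutual corecursion defining the `always take` profiles
`p_n` and `π_n` of the ∞pede. -/
inductive PedSt : Type
  | pS (n : ℕ)
  | piS (n : ℕ)
  | lS (u : Ag → ℝ)

/-- One step of the corecursion: `p_n = ⟨A, 1, ⟨A↦2^(2n+2), B↦2^(2n)⟩, π_n⟩`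
and `π_n = ⟨B, 1, ⟨A↦2^(2n+1), B↦2^(2n+3)⟩, p_{n+1}⟩`. -/
def pedStep : PedSt → (SPF Ag).Obj PedSt
  | PedSt.lS u => ⟨Sum.inl u, fun e => Empty.elim e⟩
  | PedSt.pS n =>
      ⟨Sum.inr (Ag.A, Choice.one), fun b => bif b then PedSt.piS n else PedSt.lS (uAp n)⟩
  | PedSt.piS n =>
      ⟨Sum.inr (Ag.B, Choice.one), fun b => bif b then PedSt.pS (n + 1) else PedSt.lS (uBp n)⟩

/-- The ∞pede profile `p_n` where both agents always take. -/
def pped (n : ℕ) : StratProf Ag :=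
  PFunctor.M.corec pedStep (PedSt.pS n)

/-- The ∞pede profile `π_n` where both agents always take. -/
def piped (n : ℕ) : StratProf Ag :=
  PFunctor.M.corec pedStep (PedSt.piS n)

lemma corec_lS (u : Ag → ℝ) :
    PFunctor.M.corec pedStep (PedSt.lS u) = leafP u := by
  rw [← PFunctor.M.mk_dest (PFunctor.M.corec pedStep (PedSt.lS u)),
    PFunctor.M.dest_corec]
  show PFunctor.M.mk (⟨Sum.inl u, PFunctor.M.corec pedStep ∘ (Empty.elim : Empty → PedSt)⟩ :
      (SPF Ag).Obj (StratProf Ag)) = leafP u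
  rw [leafP]
  exact congrArg (fun f : Empty → StratProf Ag =>
    PFunctor.M.mk (⟨Sum.inl u, f⟩ : (SPF Ag).Obj (StratProf Ag))) (funext fun e => e.elim)

lemma pped_eq (n : ℕ) :
    pped n = nodeP Ag.A Choice.one (leafP (uAp n)) (piped n) := by
  rw [pped, ← PFunctor.M.mk_dest (PFunctor.M.corec pedStep (PedSt.pS n)),
    PFunctor.M.dest_corec]
  show PFunctor.M.mk (⟨Sum.inr (Ag.A, Choice.one),
      PFunctor.M.corec pedStep ∘ (fun b => bif b then PedSt.piS n else PedSt.lS (uAp n) :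
        Bool → PedSt)⟩ : (SPF Ag).Obj (StratProf Ag)) = _
  rw [nodeP]
  exact congrArg (fun f : Bool → StratProf Ag =>
    PFunctor.M.mk (⟨Sum.inr (Ag.A, Choice.one), f⟩ : (SPF Ag).Obj (StratProf Ag)))
    (funext fun b => by cases b <;> simp [Function.comp, corec_lS, piped] <;> rfl)

lemma piped_eq (n : ℕ) :
    piped n = nodeP Ag.B Choice.one (leafP (uBp n)) (pped (n + 1)) := by
  rw [piped, ← PFunctor.M.mk_dest (PFunctor.M.corec pedStep (PedSt.piS n)),
    PFunctor.M.dest_corec]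
  show PFunctor.M.mk (⟨Sum.inr (Ag.B, Choice.one),
      PFunctor.M.corec pedStep ∘ (fun b => bif b then PedSt.pS (n + 1) else PedSt.lS (uBp n) :
        Bool → PedSt)⟩ : (SPF Ag).Obj (StratProf Ag)) = _
  rw [nodeP]
  exact congrArg (fun f : Bool → StratProf Ag =>
    PFunctor.M.mk (⟨Sum.inr (Ag.B, Choice.one), f⟩ : (SPF Ag).Obj (StratProf Ag)))
    (funext fun b => by cases b <;> simp [Function.comp, corec_lS, pped] <;> rfl)

lemma leaf_ne_node {Agent : Type} (u : Agent → ℝ) (a : Agent) (c : Choice)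
    (s₁ s₂ : StratProf Agent) : leafP u ≠ nodeP a c s₁ s₂ := by
  intro h
  have := congrArg PFunctor.M.dest h
  have this : (⟨Sum.inl u, fun e => Empty.elim e⟩ : (SPF Agent).Obj (StratProf Agent)) =
      ⟨Sum.inr (a, c), fun b => bif b then s₂ else s₁⟩ :=
    (PFunctor.M.dest_mk _).symm.trans (this.trans (PFunctor.M.dest_mk _))
  have h3 : (Sum.inl u : (Agent → ℝ) ⊕ (Agent × Choice)) = Sum.inr (a, c) :=
    congrArg (fun x : (SPF Agent).Obj (StratProf Agent) => x.1) this
  exact Sum.inl_ne_inr h3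

lemma nodeP_inj {Agent : Type} {a a' : Agent} {c c' : Choice}
    {s₁ s₂ s₁' s₂' : StratProf Agent}
    (h : nodeP a c s₁ s₂ = nodeP a' c' s₁' s₂') :
    a = a' ∧ c = c' ∧ s₁ = s₁' ∧ s₂ = s₂' := by
  have h2 := congrArg PFunctor.M.dest h
  simp only [nodeP, PFunctor.M.dest_mk] at h2
  have hfst : (Sum.inr (a, c) : (Agent → ℝ) ⊕ (Agent × Choice)) = Sum.inr (a', c') :=
    congrArg Sigma.fst h2
  obtain ⟨ha, hc⟩ := Prod.mk.injEq .. ▸ (Sum.inr.inj hfst)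
  subst ha; subst hc
  have hsnd : (fun b => bif b then s₂ else s₁) = (fun b => bif b then s₂' else s₁') := by
    have := (Sigma.mk.inj_iff.mp h2).2
    exact eq_of_heq this
  refine ⟨rfl, rfl, ?_, ?_⟩
  · exact congrFun hsnd false
  · exact congrFun hsnd true

lemma utilR_unique {Agent : Type} {s : StratProf Agent} {u : Agent → ℝ}
    (h : UtilR s u) : ∀ v, UtilR s v → u = v := by
  induction h with
  | leaf w =>
      intro v hv
      generalize he : leafP w = t at hv
      cases hv with
      | leaf u' =>
          have := congrArg PFunctor.M.dest he
          simp only [leafP, PFunctor.M.dest_mk] at this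
          exact Sum.inl.inj (congrArg Sigma.fst this)
      | node1 a s₁ s₂ u' _ => exact absurd he (leaf_ne_node _ _ _ _ _)
      | node2 a s₁ s₂ u' _ => exact absurd he (leaf_ne_node _ _ _ _ _)
  | node1 a s₁ s₂ w _ ih =>
      intro v hv
      generalize he : nodeP a Choice.one s₁ s₂ = t at hv
      cases hv with
      | leaf u' => exact absurd he.symm (leaf_ne_node _ _ _ _ _)
      | node1 a' s₁' s₂' u' h' =>
          obtain ⟨_, _, h1, _⟩ := nodeP_inj he
          exact ih _ (h1 ▸ h')
      | node2 a' s₁' s₂' u' h' =>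
          obtain ⟨_, hc, _, _⟩ := nodeP_inj he
          exact absurd hc (by simp)
  | node2 a s₁ s₂ w _ ih =>
      intro v hv
      generalize he : nodeP a Choice.two s₁ s₂ = t at hv
      cases hv with
      | leaf u' => exact absurd he.symm (leaf_ne_node _ _ _ _ _)
      | node2 a' s₁' s₂' u' h' =>
          obtain ⟨_, _, _, h2⟩ := nodeP_inj he
          exact ih _ (h2 ▸ h')
      | node1 a' s₁' s₂' u' h' =>
          obtain ⟨_, hc, _, _⟩ := nodeP_inj he
          exact absurd hc (by simp)

lemma util_eq {Agent : Type} {s : StratProf Agent} {u : Agent → ℝ}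
    (h : UtilR s u) : util s = u := by
  rw [util, dif_pos ⟨u, h⟩]
  exact utilR_unique (Exists.choose_spec (⟨u, h⟩ : ∃ u, UtilR s u)) u h

lemma utilR_pped (n : ℕ) : UtilR (pped n) (uAp n) := by
  rw [pped_eq]; exact UtilR.node1 _ _ _ _ (UtilR.leaf _)

lemma utilR_piped (n : ℕ) : UtilR (piped n) (uBp n) := by
  rw [piped_eq]; exact UtilR.node1 _ _ _ _ (UtilR.leaf _)

/-- The invariant predicate. -/
def PedR (t : StratProf Ag) : Prop :=
  (∃ u, t = leafP u) ∨ (∃ m, t = pped m) ∨ (∃ m, t = piped m)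

lemma always_conv_of_pedR {t : StratProf Ag} (h : PedR t) : Always Conv t := by
  refine ⟨PedR, h, ?_⟩
  rintro s (⟨u, rfl⟩ | ⟨m, rfl⟩ | ⟨m, rfl⟩)
  · exact ⟨Conv.leaf u, fun a c s₁ s₂ he => absurd he (leaf_ne_node _ _ _ _ _)⟩
  · constructor
    · rw [pped_eq]; exact Conv.node1 _ _ _ (Conv.leaf _)
    · intro a c s₁ s₂ he
      obtain ⟨_, _, h1, h2⟩ := nodeP_inj ((pped_eq m).symm.trans he)
      exact ⟨Or.inl ⟨_, h1.symm⟩, Or.inr (Or.inr ⟨m, h2.symm⟩)⟩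
  · constructor
    · rw [piped_eq]; exact Conv.node1 _ _ _ (Conv.leaf _)
    · intro a c s₁ s₂ he
      obtain ⟨_, _, h1, h2⟩ := nodeP_inj ((piped_eq m).symm.trans he)
      exact ⟨Or.inl ⟨_, h1.symm⟩, Or.inr (Or.inl ⟨m + 1, h2.symm⟩)⟩

lemma pe_of_pedR {t : StratProf Ag} (h : PedR t) : PE t := by
  refine ⟨always_conv_of_pedR h, ?_, ?_⟩
  · intro a s₁ s₂ he
    rcases h with ⟨u, rfl⟩ | ⟨m, rfl⟩ | ⟨m, rfl⟩
    · exact absurd he (leaf_ne_node _ _ _ _ _)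
    · obtain ⟨ha, _, h1, h2⟩ := nodeP_inj ((pped_eq m).symm.trans he)
      rw [← h1, ← h2, ← ha, util_eq (UtilR.leaf (uAp m)), util_eq (utilR_piped m)]
      show (2:ℝ) ^ (2 * m + 2) ≥ (2:ℝ) ^ (2 * m + 1)
      exact pow_le_pow_right₀ one_le_two (by omega)
    · obtain ⟨ha, _, h1, h2⟩ := nodeP_inj ((piped_eq m).symm.trans he)
      rw [← h1, ← h2, ← ha, util_eq (UtilR.leaf (uBp m)), util_eq (utilR_pped (m + 1))]
      show (2:ℝ) ^ (2 * m + 3) ≥ (2:ℝ) ^ (2 * (m + 1))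
      exact pow_le_pow_right₀ one_le_two (by omega)
  · intro a s₁ s₂ he
    rcases h with ⟨u, rfl⟩ | ⟨m, rfl⟩ | ⟨m, rfl⟩
    · exact absurd he (leaf_ne_node _ _ _ _ _)
    · obtain ⟨_, hc, _, _⟩ := nodeP_inj ((pped_eq m).symm.trans he)
      exact absurd hc (by simp)
    · obtain ⟨_, hc, _, _⟩ := nodeP_inj ((piped_eq m).symm.trans he)
      exact absurd hc (by simp)

lemma spe_of_pedR {t : StratProf Ag} (h : PedR t) : SPE t := by
  refine ⟨PedR, h, ?_⟩
  rintro s hs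
  refine ⟨pe_of_pedR hs, ?_⟩
  rcases hs with ⟨u, rfl⟩ | ⟨m, rfl⟩ | ⟨m, rfl⟩
  · exact fun a c s₁ s₂ he => absurd he (leaf_ne_node _ _ _ _ _)
  · intro a c s₁ s₂ he
    obtain ⟨_, _, h1, h2⟩ := nodeP_inj ((pped_eq m).symm.trans he)
    exact ⟨Or.inl ⟨_, h1.symm⟩, Or.inr (Or.inr ⟨m, h2.symm⟩)⟩
  · intro a c s₁ s₂ he
    obtain ⟨_, _, h1, h2⟩ := nodeP_inj ((piped_eq m).symm.trans he)
    exact ⟨Or.inl ⟨_, h1.symm⟩, Or.inr (Or.inl ⟨m + 1, h2.symm⟩)⟩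

/-- All the `always take` profiles `p_n` and `π_n` of the ∞pede are subgame
perfect equilibria: `∀ n, SPE(p_n) ∧ SPE(π_n)`. -/
theorem spe_pped_piped (n : ℕ) : SPE (pped n) ∧ SPE (piped n) := by
  exact ⟨spe_of_pedR (Or.inr (Or.inl ⟨n, rfl⟩)),
    spe_of_pedR (Or.inr (Or.inr ⟨n, rfl⟩))⟩
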